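/- arXiv:1801.07858 — 2 statements merged into one kernel-verified Lean document; each statement's English description precedes it below -/
import Mathlib

section
/- Let d = 2. Every L²-normalized Laplace eigenfunction ψ on 𝕋² satisfies ∫_{𝕋²} |ψ|⁴ dx ≤ 3; equivalently, ‖ψ‖_{L⁴(𝕋²)} ≤ 3^{1/4}. -/
open MeasureTheory Real BigOperators ComplexConjugate

noncomputable section

instance : Fact (0 < 2 * π) := ⟨by positivity⟩

/-- The flat torus `𝕋^d = ℝ^d/(2πℤ)^d`. -/
abbrev Td (d : ℕ) := Fin d → AddCircle (2 * π)

/-- The normalized Haar probability measure on the flat torus. -/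
def haarT (d : ℕ) : Measure (Td d) :=
  Measure.pi fun _ : Fin d => AddCircle.haarAddCircle

/-- The character `e_k(x) = e^{i⟨k,x⟩}` for `k ∈ ℤ^d`. -/
def eChar {d : ℕ} (k : Fin d → ℤ) (x : Td d) : ℂ := ∏ i, fourier (k i) (x i)

/-- Euclidean norm of a lattice point of `ℤ^d`. -/
def znorm {d : ℕ} (k : Fin d → ℤ) : ℝ := Real.sqrt (∑ i, ((k i : ℝ)) ^ 2)

/-- The primitive lattice point `n̂` generating `n ≠ 0`: divide out the gcd of coordinates. -/
def primPart {d : ℕ} (n : Fin d → ℤ) : Fin d → ℤ := fun i => n i / Finset.univ.gcd n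

/-- Fourier coefficient `â_n = ∫ a(x) e^{-i⟨n,x⟩} dx` of `a ∈ L²(𝕋^d)`. -/
def fcoef {d : ℕ} (a : Td d → ℂ) (n : Fin d → ℤ) : ℂ :=
  ∫ x, a x * conj (eChar n x) ∂(haarT d)

/-- Fourier transform `μ̂(n) = ∫ e^{-i⟨n,x⟩} dμ(x)` of a measure on `𝕋^d`. -/
def muF {d : ℕ} (μ : Measure (Td d)) (n : Fin d → ℤ) : ℂ :=
  ∫ x, conj (eChar n x) ∂μ

/-- `N(λ) = #{k ∈ ℤ^d : ‖k‖ ≤ λ}`, the spectral counting function. -/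
def latticeCount (d : ℕ) (lam : ℝ) : ℕ := Set.ncard {k : Fin d → ℤ | znorm k ≤ lam}

/-- An eigenbasis of `L²(𝕋^d)`: an orthonormal basis `(ψ_j)` of Laplace eigenfunctions
`ψ_j = ∑_{‖k‖ = Λ j} c_j(k) e_k`, with nondecreasing eigenvalues `(Λ j)²` (nonnegative
integers), orthonormality and completeness expressed via the Fourier coefficients. -/
structure Eigenbasis (d : ℕ) where
  ψ : ℕ → Td d → ℂ
  Λ : ℕ → ℝ
  c : ℕ → (Fin d → ℤ) → ℂ
  nonneg : ∀ j, 0 ≤ Λ j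
  mono : Monotone Λ
  eig_int : ∀ j, ∃ E : ℕ, Λ j ^ 2 = E
  repr : ∀ j x, ψ j x = ∑' k : Fin d → ℤ, c j k * eChar k x
  supp : ∀ j k, c j k ≠ 0 → znorm k = Λ j
  ortho : ∀ i j, ∑' k : Fin d → ℤ, c i k * conj (c j k) = if i = j then 1 else 0
  complete : ∀ k l : Fin d → ℤ, ∑' j : ℕ, c j k * conj (c j l) = if k = l then 1 else 0

/-- A function on the torus is smooth if its `(2πℤ)^d`-periodic lift to `ℝ^d` is `C^∞`. -/
def SmoothOnTorus {d : ℕ} (a : Td d → ℂ) : Prop :=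
  ContDiff ℝ (⊤ : ℕ∞) fun x : Fin d → ℝ => a fun i => (x i : AddCircle (2 * π))

/- ### Auxiliary lemmas for statement 7 -/

lemma Zyg.integral_fourier1 (n : ℤ) :
    ∫ x : AddCircle (2*π), fourier n x ∂AddCircle.haarAddCircle = if n = 0 then 1 else 0 := by
  split_ifs with h
  · simp [h, fourier_zero]
  · exact integral_eq_zero_of_add_right_eq_neg (fourier_add_half_inv_index h (by positivity))

instance : IsProbabilityMeasure (haarT 2) := by
  unfold haarT; infer_instance

lemma Zyg.integral_eChar (n : Fin 2 → ℤ) :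
    ∫ x, eChar n x ∂(haarT 2) = if n = 0 then 1 else 0 := by
  have h := (measurePreserving_piFinTwo
      (fun _ : Fin 2 => (AddCircle.haarAddCircle : Measure (AddCircle (2*π))))).integral_comp'
      (f := MeasurableEquiv.piFinTwo (fun _ : Fin 2 => AddCircle (2*π)))
      (g := fun p : AddCircle (2*π) × AddCircle (2*π) =>
        fourier (n 0) p.1 * fourier (n 1) p.2)
  have h2 : ∫ x, eChar n x ∂(haarT 2)
      = ∫ p : AddCircle (2*π) × AddCircle (2*π),
          fourier (n 0) p.1 * fourier (n 1) p.2
          ∂(((AddCircle.haarAddCircle : Measure (AddCircle (2*π)))).prod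
              AddCircle.haarAddCircle) := by
    rw [← h]
    congr 1
    ext x
    simp [eChar, Fin.prod_univ_two, MeasurableEquiv.piFinTwo]
  rw [h2, integral_prod_mul, Zyg.integral_fourier1, Zyg.integral_fourier1]
  by_cases h0 : n = 0
  · simp [h0]
  · have h1 : n 0 ≠ 0 ∨ n 1 ≠ 0 := by
      by_contra hc
      push_neg at hc
      exact h0 (funext fun i => by fin_cases i <;> simp [hc.1, hc.2])
    rw [if_neg h0]
    by_cases h2 : n 0 = 0
    · have h3 : n 1 ≠ 0 := by
        rcases h1 with h1 | h1
        · exact absurd h2 h1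
        · exact h1
      simp [h2, h3]
    · simp [h2]

lemma Zyg.keyZ (n0 n1 E a0 a1 b0 b1 c0 c1 : ℤ)
    (hn : n0 ≠ 0 ∨ n1 ≠ 0)
    (ha1 : a0^2 + a1^2 = E) (ha2 : (a0 - n0)^2 + (a1 - n1)^2 = E)
    (hb1 : b0^2 + b1^2 = E) (hb2 : (b0 - n0)^2 + (b1 - n1)^2 = E)
    (hc1 : c0^2 + c1^2 = E) (hc2 : (c0 - n0)^2 + (c1 - n1)^2 = E)
    (hab : ¬(a0 = b0 ∧ a1 = b1)) (hac : ¬(a0 = c0 ∧ a1 = c1)) :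
    b0 = c0 ∧ b1 = c1 := by
  set d0 := a0 - b0 with hd0
  set d1 := a1 - b1 with hd1
  set e0 := a0 - c0 with he0
  set e1 := a1 - c1 with he1
  have hdn : n0 * d0 + n1 * d1 = 0 := by
    have h2 : 2 * (n0 * d0 + n1 * d1) = 0 := by linear_combination ha1 - ha2 - (hb1 - hb2)
    omega
  have hen : n0 * e0 + n1 * e1 = 0 := by
    have h2 : 2 * (n0 * e0 + n1 * e1) = 0 := by linear_combination ha1 - ha2 - (hc1 - hc2)
    omega
  have hdc : (a0 + b0) * d0 + (a1 + b1) * d1 = 0 := by linear_combination ha1 - hb1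
  have hec : (a0 + c0) * e0 + (a1 + c1) * e1 = 0 := by linear_combination ha1 - hc1
  have hd : d0 ≠ 0 ∨ d1 ≠ 0 := by
    by_contra h; push_neg at h; exact hab ⟨by omega, by omega⟩
  have he : e0 ≠ 0 ∨ e1 ≠ 0 := by
    by_contra h; push_neg at h; exact hac ⟨by omega, by omega⟩
  have hcross : d0 * e1 - d1 * e0 = 0 := by
    have h0 : n0 * (d0 * e1 - d1 * e0) = 0 := by linear_combination e1 * hdn - d1 * hen
    have h1 : n1 * (d0 * e1 - d1 * e0) = 0 := by linear_combination d0 * hen - e0 * hdn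
    rcases hn with hn | hn
    · exact (mul_eq_zero.mp h0).resolve_left hn
    · exact (mul_eq_zero.mp h1).resolve_left hn
  have hu : (a0 + c0) * d0 + (a1 + c1) * d1 = 0 := by
    have h0 : e0 * ((a0 + c0) * d0 + (a1 + c1) * d1) = 0 := by
      linear_combination d0 * hec - (a1 + c1) * hcross
    have h1 : e1 * ((a0 + c0) * d0 + (a1 + c1) * d1) = 0 := by
      linear_combination d1 * hec + (a0 + c0) * hcross
    rcases he with he' | he'
    · exact (mul_eq_zero.mp h0).resolve_left he'
    · exact (mul_eq_zero.mp h1).resolve_left he'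
  have hv1 : d0 * (c0 - b0) + d1 * (c1 - b1) = 0 := by linear_combination hu - hdc
  have hv2 : d0 * (c1 - b1) - d1 * (c0 - b0) = 0 := by linear_combination -hcross
  have h0 : (d0^2 + d1^2) * (c0 - b0) = 0 := by linear_combination d0 * hv1 - d1 * hv2
  have h1 : (d0^2 + d1^2) * (c1 - b1) = 0 := by linear_combination d1 * hv1 + d0 * hv2
  have hdd : d0^2 + d1^2 ≠ 0 := by
    rcases hd with h | h <;> positivity
  exact ⟨by have := (mul_eq_zero.mp h0).resolve_left hdd; omega,
    by have := (mul_eq_zero.mp h1).resolve_left hdd; omega⟩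

lemma Zyg.fiber_bij {M : Type*} [AddCommMonoid M] (S : Finset (Fin 2 → ℤ)) (n : Fin 2 → ℤ)
    (f : (Fin 2 → ℤ) → (Fin 2 → ℤ) → M) :
    ∑ kl ∈ (S ×ˢ S).filter (fun kl => kl.1 - kl.2 = n), f kl.1 kl.2
      = ∑ k ∈ S.filter (fun k => k - n ∈ S), f k (k - n) := by
  refine Finset.sum_nbij' (i := fun kl => kl.1) (j := fun k => (k, k - n)) ?_ ?_ ?_ ?_ ?_
  · rintro ⟨k, l⟩ h
    simp only [Finset.mem_filter, Finset.mem_product] at h ⊢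
    obtain ⟨⟨h1, h2⟩, h3⟩ := h
    have : l = k - n := by linear_combination -h3
    exact ⟨h1, by rwa [← this]⟩
  · intro k h
    simp only [Finset.mem_filter, Finset.mem_product] at h ⊢
    exact ⟨⟨h.1, h.2⟩, by ring⟩
  · rintro ⟨k, l⟩ h
    simp only [Finset.mem_filter, Finset.mem_product] at h
    have : l = k - n := by linear_combination -h.2
    simp [this]
  · intro k _; rfl
  · rintro ⟨k, l⟩ h
    simp only [Finset.mem_filter, Finset.mem_product] at h
    have : l = k - n := by linear_combination -h.2
    simp [this]

lemma Zyg.eChar_add {d : ℕ} (a b : Fin d → ℤ) (x : Td d) :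
    eChar (a + b) x = eChar a x * eChar b x := by
  simp only [eChar, ← Finset.prod_mul_distrib]
  exact Finset.prod_congr rfl fun i _ => by simp [fourier_add]

lemma Zyg.eChar_conj {d : ℕ} (a : Fin d → ℤ) (x : Td d) :
    conj (eChar a x) = eChar (-a) x := by
  simp only [eChar, map_prod]
  exact Finset.prod_congr rfl fun i _ => by simp [← fourier_neg]

lemma Zyg.eChar_continuous {d : ℕ} (n : Fin d → ℤ) : Continuous (eChar n) := by
  unfold eChar
  exact continuous_finset_prod _ fun i _ =>
    (map_continuous (fourier (n i))).comp (continuous_apply i)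

lemma Zyg.eChar_integrable (n : Fin 2 → ℤ) : Integrable (eChar n) (haarT 2) :=
  (Zyg.eChar_continuous n).integrable_of_hasCompactSupport
    (isClosed_tsupport _).isCompact

/-- Zygmund's estimate — uniform `L⁴` bound in dimension 2. -/
theorem statement7 (E : ℕ) (ψ : Td 2 → ℂ) (c : (Fin 2 → ℤ) → ℂ)
    (hsupp : ∀ k, c k ≠ 0 → znorm k ^ 2 = E)
    (hrepr : ∀ x, ψ x = ∑' k : Fin 2 → ℤ, c k * eChar k x)
    (hnorm : ∑' k : Fin 2 → ℤ, ‖c k‖ ^ 2 = 1) :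
    (∫ x, ‖ψ x‖ ^ 4 ∂(haarT 2)) ≤ 3 ∧
      (∫ x, ‖ψ x‖ ^ 4 ∂(haarT 2)) ^ ((1 : ℝ) / 4) ≤ (3 : ℝ) ^ ((1 : ℝ) / 4) := by
  classical
  -- the finite support
  set S : Finset (Fin 2 → ℤ) :=
    (Fintype.piFinset (fun _ : Fin 2 => Finset.Icc (-(E:ℤ)) E)).filter
      (fun k => k 0 ^ 2 + k 1 ^ 2 = (E:ℤ)) with hSdef
  have hmemS : ∀ k : Fin 2 → ℤ, k 0 ^ 2 + k 1 ^ 2 = (E:ℤ) → k ∈ S := by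
    intro k hk
    rw [hSdef, Finset.mem_filter, Fintype.mem_piFinset]
    refine ⟨fun i => ?_, hk⟩
    rw [Finset.mem_Icc]
    have hb : ∀ m : ℤ, m ^ 2 ≤ (E:ℤ) → -(E:ℤ) ≤ m ∧ m ≤ E := by
      intro m hm
      constructor <;> nlinarith [sq_nonneg (m + E), sq_nonneg (m - E), Int.ofNat_nonneg E]
    fin_cases i
    · exact hb (k 0) (by nlinarith [sq_nonneg (k 1)])
    · exact hb (k 1) (by nlinarith [sq_nonneg (k 0)])
  have hSmem : ∀ k ∈ S, k 0 ^ 2 + k 1 ^ 2 = (E:ℤ) := fun k hk => (Finset.mem_filter.mp hk).2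
  have hcS : ∀ k, c k ≠ 0 → k ∈ S := by
    intro k hk
    apply hmemS
    have h := hsupp k hk
    have hz : znorm k ^ 2 = ((k 0 : ℝ)) ^ 2 + ((k 1 : ℝ)) ^ 2 := by
      rw [znorm, sq_sqrt (by positivity), Fin.sum_univ_two]
    rw [hz] at h
    exact_mod_cast h
  have hc0 : ∀ k ∉ S, c k = 0 := fun k hk => by
    by_contra h; exact hk (hcS k h)
  -- finite representations
  have hΨ : ∀ x, ψ x = ∑ k ∈ S, c k * eChar k x := fun x => by
    rw [hrepr x]
    exact tsum_eq_sum fun k hk => by rw [hc0 k hk, zero_mul]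
  have hN : ∑ k ∈ S, ‖c k‖ ^ 2 = 1 := by
    rw [← hnorm]
    exact (tsum_eq_sum fun k hk => by rw [hc0 k hk]; simp).symm
  -- the correlation coefficients
  set a : (Fin 2 → ℤ) → ℂ := fun n =>
    ∑ kl ∈ (S ×ˢ S).filter (fun kl => kl.1 - kl.2 = n), c kl.1 * conj (c kl.2) with hadef
  set D : Finset (Fin 2 → ℤ) := (S ×ˢ S).image (fun kl => kl.1 - kl.2) with hDdef
  set I : ℝ := ∫ x, ‖ψ x‖ ^ 4 ∂(haarT 2) with hIdef
  -- Step 1: (I : ℂ) = ∑ n ∈ D, ‖a n‖²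
  have expand : ∀ x, ((‖ψ x‖ ^ 4 : ℝ) : ℂ)
      = ∑ kl ∈ S ×ˢ S, ∑ mp ∈ S ×ˢ S,
          (c kl.1 * conj (c kl.2) * (c mp.1 * conj (c mp.2)))
            * eChar (kl.1 - kl.2 + (mp.1 - mp.2)) x := by
    intro x
    have hQ : ((‖ψ x‖ ^ 2 : ℝ) : ℂ)
        = ∑ kl ∈ S ×ˢ S, (c kl.1 * conj (c kl.2)) * eChar (kl.1 - kl.2) x := by
      have h1 : ((‖ψ x‖ ^ 2 : ℝ) : ℂ) = ψ x * conj (ψ x) := by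
        rw [Complex.mul_conj]
        norm_cast
        simp [Complex.normSq_eq_norm_sq]
      rw [h1, hΨ x, map_sum, Finset.sum_mul_sum, ← Finset.sum_product']
      refine Finset.sum_congr rfl fun kl _ => ?_
      rw [map_mul, Zyg.eChar_conj, sub_eq_add_neg, Zyg.eChar_add]
      ring
    have h2 : ((‖ψ x‖ ^ 4 : ℝ) : ℂ) = ((‖ψ x‖ ^ 2 : ℝ) : ℂ) * ((‖ψ x‖ ^ 2 : ℝ) : ℂ) := by
      push_cast; ring
    rw [h2, hQ, Finset.sum_mul_sum]
    refine Finset.sum_congr rfl fun kl _ => Finset.sum_congr rfl fun mp _ => ?_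
    rw [Zyg.eChar_add]
    ring
  have hI2 : (I : ℂ) = ∑ kl ∈ S ×ˢ S, ∑ mp ∈ S ×ˢ S,
      (c kl.1 * conj (c kl.2) * (c mp.1 * conj (c mp.2)))
        * (if kl.1 - kl.2 + (mp.1 - mp.2) = 0 then (1:ℂ) else 0) := by
    have h1 : (I : ℂ) = ∫ x, ((‖ψ x‖ ^ 4 : ℝ) : ℂ) ∂(haarT 2) := by
      rw [hIdef]; exact integral_ofReal.symm
    rw [h1]
    calc ∫ x, ((‖ψ x‖ ^ 4 : ℝ) : ℂ) ∂(haarT 2)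
        = ∫ x, ∑ kl ∈ S ×ˢ S, ∑ mp ∈ S ×ˢ S,
            (c kl.1 * conj (c kl.2) * (c mp.1 * conj (c mp.2)))
              * eChar (kl.1 - kl.2 + (mp.1 - mp.2)) x ∂(haarT 2) := by
          exact integral_congr_ae (Filter.Eventually.of_forall expand)
      _ = ∑ kl ∈ S ×ˢ S, ∑ mp ∈ S ×ˢ S,
            (c kl.1 * conj (c kl.2) * (c mp.1 * conj (c mp.2)))
              * ∫ x, eChar (kl.1 - kl.2 + (mp.1 - mp.2)) x ∂(haarT 2) := by
          rw [integral_finset_sum _ fun kl _ => integrable_finset_sum _ fun mp _ =>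
            ((Zyg.eChar_integrable _).const_mul _)]
          exact Finset.sum_congr rfl fun kl _ => by
            rw [integral_finset_sum _ fun mp _ => (Zyg.eChar_integrable _).const_mul _]
            exact Finset.sum_congr rfl fun mp _ => integral_const_mul _ _
      _ = _ := by
          exact Finset.sum_congr rfl fun kl _ => Finset.sum_congr rfl fun mp _ => by
            rw [Zyg.integral_eChar]
  have hI3 : (I : ℂ) = ∑ kl ∈ S ×ˢ S, (c kl.1 * conj (c kl.2)) * conj (a (kl.1 - kl.2)) := by
    rw [hI2]
    refine Finset.sum_congr rfl fun kl _ => ?_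
    have hconj : conj (a (kl.1 - kl.2))
        = ∑ mp ∈ (S ×ˢ S).filter (fun mp => mp.2 - mp.1 = kl.1 - kl.2),
            c mp.1 * conj (c mp.2) := by
      rw [hadef, map_sum]
      refine Finset.sum_nbij' (i := Prod.swap) (j := Prod.swap) ?_ ?_ ?_ ?_ ?_
      · rintro ⟨k, l⟩ h
        simp only [Finset.mem_filter, Finset.mem_product] at h ⊢
        exact ⟨⟨h.1.2, h.1.1⟩, by simpa using h.2⟩
      · rintro ⟨m, p⟩ h
        simp only [Finset.mem_filter, Finset.mem_product] at h ⊢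
        exact ⟨⟨h.1.2, h.1.1⟩, by simpa using h.2⟩
      · rintro ⟨k, l⟩ _; rfl
      · rintro ⟨k, l⟩ _; rfl
      · rintro ⟨k, l⟩ _
        simp [mul_comm]
    rw [hconj, Finset.mul_sum, Finset.sum_filter]
    refine Finset.sum_congr rfl fun mp _ => ?_
    have hiff : (kl.1 - kl.2 + (mp.1 - mp.2) = 0) ↔ (mp.2 - mp.1 = kl.1 - kl.2) := by
      constructor <;> intro h <;> linear_combination -h
    by_cases h : kl.1 - kl.2 + (mp.1 - mp.2) = 0
    · rw [if_pos h, if_pos (hiff.mp h)]; ring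
    · rw [if_neg h, if_neg (fun hh => h (hiff.mpr hh))]; ring
  have hI4 : (I : ℂ) = ∑ n ∈ D, a n * conj (a n) := by
    rw [hI3, hDdef,
      ← Finset.sum_fiberwise_of_maps_to (g := fun kl : (Fin 2 → ℤ) × (Fin 2 → ℤ) => kl.1 - kl.2)
        (fun kl hkl => Finset.mem_image_of_mem _ hkl)
        (fun kl => (c kl.1 * conj (c kl.2)) * conj (a (kl.1 - kl.2)))]
    refine Finset.sum_congr rfl fun n _ => ?_
    have h1 : ∀ kl ∈ (S ×ˢ S).filter
        (fun kl : (Fin 2 → ℤ) × (Fin 2 → ℤ) => kl.1 - kl.2 = n),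
        (c kl.1 * conj (c kl.2)) * conj (a (kl.1 - kl.2))
          = (c kl.1 * conj (c kl.2)) * conj (a n) := fun kl hkl => by
      rw [(Finset.mem_filter.mp hkl).2]
    rw [Finset.sum_congr rfl h1, ← Finset.sum_mul]
  have hI5 : I = ∑ n ∈ D, ‖a n‖ ^ 2 := by
    have : ((∑ n ∈ D, ‖a n‖ ^ 2 : ℝ) : ℂ) = ∑ n ∈ D, a n * conj (a n) := by
      push_cast
      refine Finset.sum_congr rfl fun n _ => ?_
      rw [Complex.mul_conj]
      norm_cast
      simp [Complex.normSq_eq_norm_sq]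
    exact_mod_cast hI4.trans this.symm
  -- Step 2: bound the sum
  have ha0 : a 0 = 1 := by
    show (∑ kl ∈ (S ×ˢ S).filter (fun kl => kl.1 - kl.2 = (0 : Fin 2 → ℤ)),
      c kl.1 * conj (c kl.2)) = 1
    have h1 : ∑ kl ∈ (S ×ˢ S).filter (fun kl => kl.1 - kl.2 = (0 : Fin 2 → ℤ)),
        c kl.1 * conj (c kl.2) = ∑ k ∈ S.filter (fun k => k - 0 ∈ S), c k * conj (c (k - 0)) :=
      Zyg.fiber_bij S 0 (fun k l => c k * conj (c l))
    rw [h1]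
    have h2 : S.filter (fun k => k - 0 ∈ S) = S := by
      refine Finset.filter_true_of_mem fun k hk => by simpa using hk
    rw [h2]
    have h3 : ∀ k ∈ S, c k * conj (c (k - 0)) = ((‖c k‖ ^ 2 : ℝ) : ℂ) := by
      intro k _
      rw [sub_zero, Complex.mul_conj]
      norm_cast
      simp [Complex.normSq_eq_norm_sq]
    rw [Finset.sum_congr rfl h3, ← Complex.ofReal_sum, hN, Complex.ofReal_one]
  -- the fibers over nonzero n have at most 2 elements
  have hcard : ∀ n : Fin 2 → ℤ, n ≠ 0 → (S.filter (fun k => k - n ∈ S)).card ≤ 2 := by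
    intro n hn
    by_contra hgt
    push_neg at hgt
    obtain ⟨A, hA, B, hB, C, hC, hAB, hAC, hBC⟩ := Finset.two_lt_card.mp hgt
    have hn2 : n 0 ≠ 0 ∨ n 1 ≠ 0 := by
      by_contra h
      push_neg at h
      exact hn (funext (Fin.forall_fin_two.mpr ⟨h.1, h.2⟩))
    have hmem : ∀ k ∈ S.filter (fun k => k - n ∈ S),
        k 0 ^ 2 + k 1 ^ 2 = (E:ℤ) ∧ (k 0 - n 0) ^ 2 + (k 1 - n 1) ^ 2 = (E:ℤ) := by
      intro k hk
      obtain ⟨h1, h2⟩ := Finset.mem_filter.mp hk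
      refine ⟨hSmem k h1, ?_⟩
      have h3 := hSmem _ h2
      simpa using h3
    obtain ⟨hA1, hA2⟩ := hmem A hA
    obtain ⟨hB1, hB2⟩ := hmem B hB
    obtain ⟨hC1, hC2⟩ := hmem C hC
    have hab : ¬(A 0 = B 0 ∧ A 1 = B 1) := fun h =>
      hAB (funext (Fin.forall_fin_two.mpr ⟨h.1, h.2⟩))
    have hac : ¬(A 0 = C 0 ∧ A 1 = C 1) := fun h =>
      hAC (funext (Fin.forall_fin_two.mpr ⟨h.1, h.2⟩))
    obtain ⟨u, v⟩ := Zyg.keyZ (n 0) (n 1) E (A 0) (A 1) (B 0) (B 1) (C 0) (C 1)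
      hn2 hA1 hA2 hB1 hB2 hC1 hC2 hab hac
    exact hBC (funext (Fin.forall_fin_two.mpr ⟨u, v⟩))
  -- bound for nonzero frequencies
  have hbound : ∀ n : Fin 2 → ℤ, n ≠ 0 →
      ‖a n‖ ^ 2 ≤ 2 * ∑ k ∈ S.filter (fun k => k - n ∈ S), ‖c k‖ ^ 2 * ‖c (k - n)‖ ^ 2 := by
    intro n hn
    set T := S.filter (fun k => k - n ∈ S) with hTdef
    have h1 : a n = ∑ k ∈ T, c k * conj (c (k - n)) :=
      Zyg.fiber_bij S n (fun k l => c k * conj (c l))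
    have h2 : ‖a n‖ ≤ ∑ k ∈ T, ‖c k‖ * ‖c (k - n)‖ := by
      rw [h1]
      refine (norm_sum_le _ _).trans (le_of_eq (Finset.sum_congr rfl fun k _ => ?_))
      rw [norm_mul, RCLike.norm_conj]
    calc ‖a n‖ ^ 2 ≤ (∑ k ∈ T, ‖c k‖ * ‖c (k - n)‖) ^ 2 :=
          pow_le_pow_left₀ (norm_nonneg _) h2 2
      _ ≤ (T.card : ℝ) * ∑ k ∈ T, (‖c k‖ * ‖c (k - n)‖) ^ 2 := sq_sum_le_card_mul_sum_sq
      _ ≤ 2 * ∑ k ∈ T, ‖c k‖ ^ 2 * ‖c (k - n)‖ ^ 2 := by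
          have hc2 : (T.card : ℝ) ≤ 2 := by exact_mod_cast hcard n hn
          have hs : ∑ k ∈ T, (‖c k‖ * ‖c (k - n)‖) ^ 2
              = ∑ k ∈ T, ‖c k‖ ^ 2 * ‖c (k - n)‖ ^ 2 :=
            Finset.sum_congr rfl fun k _ => by ring
          rw [hs]
          exact mul_le_mul_of_nonneg_right hc2
            (Finset.sum_nonneg fun k _ => by positivity)
  -- split the sum at n = 0
  have hsplit : ∑ n ∈ D, ‖a n‖ ^ 2
      = ∑ n ∈ D.filter (fun n => n = 0), ‖a n‖ ^ 2
        + ∑ n ∈ D.filter (fun n => ¬ n = 0), ‖a n‖ ^ 2 :=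
    (Finset.sum_filter_add_sum_filter_not _ _ _).symm
  have hpart1 : ∑ n ∈ D.filter (fun n => n = 0), ‖a n‖ ^ 2 ≤ 1 := by
    have hsub : D.filter (fun n => n = 0) ⊆ {0} := by
      intro n hn
      rw [Finset.mem_filter] at hn
      rw [Finset.mem_singleton]
      exact hn.2
    calc ∑ n ∈ D.filter (fun n => n = 0), ‖a n‖ ^ 2
        ≤ ∑ n ∈ ({0} : Finset (Fin 2 → ℤ)), ‖a n‖ ^ 2 :=
          Finset.sum_le_sum_of_subset_of_nonneg hsub (fun _ _ _ => by positivity)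
      _ = ‖a 0‖ ^ 2 := Finset.sum_singleton _ _
      _ = 1 := by rw [ha0]; simp
  have hpart2 : ∑ n ∈ D.filter (fun n => ¬ n = 0), ‖a n‖ ^ 2 ≤ 2 := by
    have hstep1 : ∑ n ∈ D.filter (fun n => ¬ n = 0), ‖a n‖ ^ 2
        ≤ 2 * ∑ n ∈ D.filter (fun n => ¬ n = 0),
            ∑ k ∈ S.filter (fun k => k - n ∈ S), ‖c k‖ ^ 2 * ‖c (k - n)‖ ^ 2 := by
      rw [Finset.mul_sum]
      exact Finset.sum_le_sum fun n hn => hbound n (Finset.mem_filter.mp hn).2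
    have hstep2 : ∑ n ∈ D.filter (fun n => ¬ n = 0),
            ∑ k ∈ S.filter (fun k => k - n ∈ S), ‖c k‖ ^ 2 * ‖c (k - n)‖ ^ 2
        ≤ ∑ n ∈ D, ∑ k ∈ S.filter (fun k => k - n ∈ S), ‖c k‖ ^ 2 * ‖c (k - n)‖ ^ 2 :=
      Finset.sum_le_sum_of_subset_of_nonneg (Finset.filter_subset _ _)
        (fun n _ _ => Finset.sum_nonneg fun k _ => by positivity)
    have hstep3 : ∑ n ∈ D, ∑ k ∈ S.filter (fun k => k - n ∈ S),
            ‖c k‖ ^ 2 * ‖c (k - n)‖ ^ 2 = 1 := by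
      rw [Finset.sum_congr rfl
        (fun n _ => (Zyg.fiber_bij S n (fun k l => ‖c k‖ ^ 2 * ‖c l‖ ^ 2)).symm)]
      rw [hDdef, Finset.sum_fiberwise_of_maps_to
        (g := fun kl : (Fin 2 → ℤ) × (Fin 2 → ℤ) => kl.1 - kl.2)
        (fun kl hkl => Finset.mem_image_of_mem _ hkl)
        (fun kl => ‖c kl.1‖ ^ 2 * ‖c kl.2‖ ^ 2)]
      rw [Finset.sum_product' (f := fun k l => ‖c k‖ ^ 2 * ‖c l‖ ^ 2),
        ← Finset.sum_mul_sum, hN, one_mul]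
    calc ∑ n ∈ D.filter (fun n => ¬ n = 0), ‖a n‖ ^ 2
        ≤ 2 * ∑ n ∈ D.filter (fun n => ¬ n = 0),
            ∑ k ∈ S.filter (fun k => k - n ∈ S), ‖c k‖ ^ 2 * ‖c (k - n)‖ ^ 2 := hstep1
      _ ≤ 2 * ∑ n ∈ D, ∑ k ∈ S.filter (fun k => k - n ∈ S),
            ‖c k‖ ^ 2 * ‖c (k - n)‖ ^ 2 := by linarith [hstep2]
      _ = 2 := by rw [hstep3]; norm_num
  have hfinal : I ≤ 3 := by
    rw [hI5, hsplit]
    linarith [hpart1, hpart2]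
  have hI0 : 0 ≤ I := by
    rw [hI5]
    positivity
  exact ⟨hfinal, Real.rpow_le_rpow hI0 hfinal (by norm_num)⟩
end
end

section
/- There exists a constant c_d > 0 depending only on d ≥ 2 such that for every λ > 0 and every n ∈ ℤ^d∖{0}, one has #{k ∈ ℤ^d : ‖k‖ ≤ λ and ‖k‖² = ‖n+k‖²} ≤ c_d λ^{d−1}/‖n̂‖. -/
open MeasureTheory Real BigOperators ComplexConjugate

noncomputable section

lemma bezout_finset {ι : Type*} [DecidableEq ι] (s : Finset ι) (f : ι → ℤ) :
    ∃ u : ι → ℤ, ∑ i ∈ s, f i * u i = s.gcd f := by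
  classical
  induction s using Finset.induction_on with
  | empty => exact ⟨0, by simp⟩
  | @insert a t hat ih =>
    obtain ⟨u, hu⟩ := ih
    refine ⟨fun i => if i = a then Int.gcdA (f a) (t.gcd f)
      else Int.gcdB (f a) (t.gcd f) * u i, ?_⟩
    rw [Finset.sum_insert hat, Finset.gcd_insert]
    have h1 : ∑ i ∈ t, f i * (if i = a then Int.gcdA (f a) (t.gcd f)
        else Int.gcdB (f a) (t.gcd f) * u i)
        = Int.gcdB (f a) (t.gcd f) * ∑ i ∈ t, f i * u i := by
      rw [Finset.mul_sum]
      refine Finset.sum_congr rfl fun i hi => ?_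
      rw [if_neg (by rintro rfl; exact hat hi)]
      ring
    rw [h1, hu, show (fun i => if i = a then Int.gcdA (f a) (t.gcd f)
        else Int.gcdB (f a) (t.gcd f) * u i) a = Int.gcdA (f a) (t.gcd f) from if_pos rfl,
      ← Int.coe_gcd, Int.gcd_eq_gcd_ab]
    ring

lemma abs_coord_le {d : ℕ} (k : Fin d → ℤ) (i : Fin d) : |(k i : ℝ)| ≤ znorm k := by
  rw [znorm, ← Real.sqrt_sq_eq_abs]
  exact Real.sqrt_le_sqrt (Finset.single_le_sum (f := fun j => ((k j : ℝ))^2)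
    (fun j _ => by positivity) (Finset.mem_univ i))

lemma one_le_znorm {d : ℕ} {k : Fin d → ℤ} (hk : k ≠ 0) : 1 ≤ znorm k := by
  obtain ⟨i, hi⟩ : ∃ i, k i ≠ 0 := by
    by_contra h; push_neg at h; exact hk (funext h)
  have h1 : (1:ℝ) ≤ |(k i : ℝ)| := by
    have h : (1:ℤ) ≤ |k i| := Int.one_le_abs hi
    calc (1:ℝ) = ((1:ℤ):ℝ) := by norm_num
    _ ≤ ((|k i|:ℤ):ℝ) := by exact_mod_cast h
    _ = |(k i : ℝ)| := by push_cast; ring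
  exact le_trans h1 (abs_coord_le k i)

def zemb {d : ℕ} (k : Fin d → ℤ) : EuclideanSpace ℝ (Fin d) := WithLp.toLp 2 (fun i => (k i : ℝ))

lemma znorm_eq_norm {d : ℕ} (k : Fin d → ℤ) : znorm k = ‖zemb k‖ := by
  rw [EuclideanSpace.norm_eq, znorm]
  congr 1
  refine Finset.sum_congr rfl fun i _ => ?_
  rw [Real.norm_eq_abs, sq_abs]
  rfl

lemma znorm_triangle {d : ℕ} (n k : Fin d → ℤ) :
    znorm n ≤ znorm (n + k) + znorm k := by
  have h : zemb n = zemb (n + k) - zemb k := by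
    ext i
    show (n i : ℝ) = ((n i + k i : ℤ) : ℝ) - (k i : ℝ)
    push_cast; ring
  rw [znorm_eq_norm, znorm_eq_norm, znorm_eq_norm, h]
  exact norm_sub_le _ _


set_option maxHeartbeats 1600000

/-- lattice point count on the bisector hyperplane, long intervals. -/
theorem statement9 (d : ℕ) (hd : 2 ≤ d) :
    ∃ c : ℝ, 0 < c ∧ ∀ lam : ℝ, 0 < lam → ∀ n : Fin d → ℤ, n ≠ 0 →
      (Set.ncard {k : Fin d → ℤ | znorm k ≤ lam ∧ znorm k = znorm (n + k)} : ℝ)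
        ≤ c * lam ^ (d - 1) / znorm (primPart n) := by
  classical
  have hd0 : (0:ℝ) < d := by exact_mod_cast lt_of_lt_of_le two_pos hd
  have hd1 : (1:ℝ) ≤ (d:ℝ) := by exact_mod_cast le_trans one_le_two hd
  refine ⟨(18*d)^d * d, by positivity, ?_⟩
  intro lam hlam n hn
  set S : Set (Fin d → ℤ) := {k | znorm k ≤ lam ∧ znorm k = znorm (n + k)} with hSdef
  set g : ℤ := Finset.univ.gcd n with hgdef
  set nh : Fin d → ℤ := primPart n with hnhdef
  have hg0 : g ≠ 0 := by
    intro h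
    apply hn
    funext i
    exact (Finset.gcd_eq_zero_iff.mp h) i (Finset.mem_univ i)
  have hrep : ∀ i, n i = g * nh i := by
    intro i
    have : g ∣ n i := Finset.gcd_dvd (Finset.mem_univ i)
    rw [hnhdef, primPart, ← hgdef]
    exact (Int.mul_ediv_cancel' this).symm
  have hnh0 : nh ≠ 0 := by
    intro h
    apply hn
    funext i
    have h2 : nh i = 0 := by rw [h]; rfl
    simp [hrep i, h2]
  have hznh : 0 < znorm nh := lt_of_lt_of_le one_pos (one_le_znorm hnh0)
  rcases Set.eq_empty_or_nonempty S with hS | ⟨k₀, hk₀⟩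
  · rw [hS]
    simp only [Set.ncard_empty, Nat.cast_zero]
    positivity
  -- Nonempty case
  have hk₀1 : znorm k₀ ≤ lam := hk₀.1
  have hk₀2 : znorm k₀ = znorm (n + k₀) := hk₀.2
  have hk₀ne : k₀ ≠ 0 := by
    rintro rfl
    have h0 : znorm (0 : Fin d → ℤ) = 0 := by simp [znorm]
    have := hk₀2
    rw [h0, add_zero] at this
    exact absurd this.symm (by have := one_le_znorm hn; intro hh; rw [hh] at this; linarith)
  have hlam1 : 1 ≤ lam := le_trans (one_le_znorm hk₀ne) hk₀1
  have hn2lam : znorm n ≤ 2 * lam := by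
    have := znorm_triangle n k₀
    rw [← hk₀2] at this
    linarith
  have hnhn : znorm nh ≤ znorm n := by
    rw [znorm, znorm]
    apply Real.sqrt_le_sqrt
    apply Finset.sum_le_sum
    intro i _
    have h1 : (1:ℤ) ≤ g^2 := by nlinarith [Int.one_le_abs hg0, sq_abs g]
    have h2 : (nh i)^2 ≤ (n i)^2 := by rw [hrep i]; nlinarith [sq_nonneg (nh i)]
    exact_mod_cast h2
  -- max coordinate
  obtain ⟨i₀, -, hmax⟩ := Finset.exists_max_image Finset.univ (fun i => |nh i|)
    ⟨⟨0, by omega⟩, Finset.mem_univ _⟩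
  set q₀ : ℤ := |nh i₀| with hq₀def
  have hq₀pos : 0 < q₀ := by
    rcases (abs_nonneg (nh i₀)).lt_or_eq with h | h
    · exact h
    · exfalso
      apply hnh0
      funext i
      have h2 : |nh i| ≤ q₀ := hmax i (Finset.mem_univ i)
      rw [hq₀def, ← h] at h2
      simpa using abs_nonpos_iff.mp h2
  have hq₀le : (q₀ : ℝ) ≤ znorm nh := by
    have := abs_coord_le nh i₀
    rwa [hq₀def, Int.cast_abs]
  have hq₀r : (0:ℝ) < (q₀:ℝ) := by exact_mod_cast hq₀pos
  have hznhq : znorm nh ≤ d * q₀ := by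
    have h1 : ∑ i, ((nh i:ℝ))^2 ≤ (d : ℝ) * (q₀:ℝ)^2 := by
      calc ∑ i, ((nh i:ℝ))^2 ≤ ∑ _i : Fin d, (q₀:ℝ)^2 := by
            apply Finset.sum_le_sum
            intro i _
            have h := hmax i (Finset.mem_univ i)
            have h' : |(nh i : ℝ)| ≤ (q₀:ℝ) := by rw [← Int.cast_abs]; exact_mod_cast h
            nlinarith [sq_abs ((nh i:ℝ)), abs_nonneg ((nh i:ℝ))]
        _ = (d : ℝ) * (q₀:ℝ)^2 := by
            rw [Finset.sum_const, Finset.card_univ, Fintype.card_fin, nsmul_eq_mul]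
    have h2 : ∑ i, ((nh i:ℝ))^2 ≤ ((d:ℝ) * q₀)^2 := by nlinarith
    calc znorm nh ≤ Real.sqrt (((d:ℝ) * q₀)^2) := Real.sqrt_le_sqrt h2
      _ = (d:ℝ) * q₀ := Real.sqrt_sq (by positivity)
  -- integer scale
  set L : ℕ := ⌈lam⌉₊ with hLdef
  have hlamL : lam ≤ (L:ℝ) := Nat.le_ceil lam
  have hL2 : (L:ℝ) ≤ 2 * lam := by
    have := Nat.ceil_lt_add_one (le_of_lt hlam)
    rw [← hLdef] at this
    linarith
  have hL1 : 1 ≤ L := by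
    rw [hLdef]
    exact Nat.one_le_ceil_iff.mpr hlam
  have hq₀2L : q₀ ≤ 2 * (L:ℤ) := by
    have : (q₀:ℝ) ≤ 2 * (L:ℝ) := by
      calc (q₀:ℝ) ≤ znorm nh := hq₀le
        _ ≤ znorm n := hnhn
        _ ≤ 2 * lam := hn2lam
        _ ≤ 2 * L := by linarith
    exact_mod_cast this
  -- Bezout
  have hgcd1 : Finset.univ.gcd nh = 1 := by
    obtain ⟨i, hi⟩ : ∃ i, n i ≠ 0 := by
      by_contra h; push_neg at h; exact hn (funext h)
    rw [hnhdef]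
    unfold primPart
    exact Finset.gcd_div_eq_one (Finset.mem_univ i) hi
  obtain ⟨u, hu⟩ := bezout_finset Finset.univ nh
  rw [hgcd1] at hu
  -- constancy of the inner product on S
  have hipS : ∀ k ∈ S, 2 * (g * ∑ i, nh i * k i) = - ∑ i, (n i)^2 := by
    intro k hk
    have hsum : ∑ i, ((k i:ℝ))^2 = ∑ i, ((n i : ℝ) + (k i:ℝ))^2 := by
      have h := hk.2
      rw [znorm, znorm] at h
      have h' := (Real.sqrt_inj (by positivity) (by positivity)).mp h
      rw [h']
      refine Finset.sum_congr rfl fun i _ => ?_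
      rw [Pi.add_apply]
      push_cast
      ring
    have hz : ∑ i, (k i)^2 = ∑ i, (n i + k i)^2 := by exact_mod_cast hsum
    have hexp : ∑ i, (n i + k i)^2 = ∑ i, (n i)^2 + 2 * ∑ i, n i * k i + ∑ i, (k i)^2 := by
      rw [Finset.mul_sum, ← Finset.sum_add_distrib, ← Finset.sum_add_distrib]
      exact Finset.sum_congr rfl fun i _ => by ring
    have hnk : ∑ i, n i * k i = g * ∑ i, nh i * k i := by
      rw [Finset.mul_sum]
      exact Finset.sum_congr rfl fun i _ => by rw [hrep i]; ring
    rw [← hnk]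
    omega
  have htconst : ∀ k ∈ S, ∀ k' ∈ S, ∑ i, nh i * k i = ∑ i, nh i * k' i := by
    intro k hk k' hk'
    have h1 := hipS k hk
    have h2 := hipS k' hk'
    have h3 : g * ∑ i, nh i * k i = g * ∑ i, nh i * k' i := by omega
    exact mul_left_cancel₀ hg0 h3
  -- the translation vectors
  set M : ℕ := L * q₀.toNat with hMdef
  have hMZ : (M:ℤ) = (L:ℤ) * q₀ := by
    rw [hMdef]
    push_cast [Int.toNat_of_nonneg hq₀pos.le]
    ring
  set w : ℕ → Fin d → ℤ := fun s j =>
    if j = i₀ then ((s:ℤ) - ∑ j ∈ Finset.univ.erase i₀, nh j * (((s:ℤ) * u j) % q₀)) / nh i₀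
    else ((s:ℤ) * u j) % q₀ with hwdef
  have hkey : ∀ s : ℕ, (s:ℤ) - ∑ j ∈ Finset.univ.erase i₀, nh j * (((s:ℤ) * u j) % q₀)
      = nh i₀ * ((s:ℤ) * u i₀) + q₀ * (∑ j ∈ Finset.univ.erase i₀, nh j * (((s:ℤ) * u j) / q₀)) := by
    intro s
    have h1 : ∀ j : Fin d, nh j * (((s:ℤ) * u j) % q₀)
        = nh j * ((s:ℤ) * u j) - q₀ * (nh j * (((s:ℤ) * u j) / q₀)) := by
      intro j; rw [Int.emod_def]; ring
    rw [Finset.sum_congr rfl (fun j _ => h1 j), Finset.sum_sub_distrib, ← Finset.mul_sum]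
    have h3 := Finset.add_sum_erase Finset.univ (fun j => nh j * ((s:ℤ) * u j)) (Finset.mem_univ i₀)
    beta_reduce at h3
    have h4 : ∑ j, nh j * ((s:ℤ) * u j) = (s:ℤ) := by
      have h5 : ∑ j, nh j * ((s:ℤ) * u j) = (s:ℤ) * ∑ j, nh j * u j := by
        rw [Finset.mul_sum]; exact Finset.sum_congr rfl fun j _ => by ring
      rw [h5, hu, mul_one]
    rw [h4] at h3
    have h2 : ∑ j ∈ Finset.univ.erase i₀, nh j * ((s:ℤ) * u j)
        = (s:ℤ) - nh i₀ * ((s:ℤ) * u i₀) := by linarith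
    rw [h2]; ring
  have hdvd : ∀ s : ℕ, nh i₀ ∣ ((s:ℤ) - ∑ j ∈ Finset.univ.erase i₀, nh j * (((s:ℤ) * u j) % q₀)) := by
    intro s
    rw [hkey s]
    exact dvd_add (dvd_mul_right _ _)
      (Dvd.dvd.mul_right ((dvd_abs _ _).mpr dvd_rfl) _)
  have hwi₀ : ∀ s : ℕ, nh i₀ * w s i₀
      = (s:ℤ) - ∑ j ∈ Finset.univ.erase i₀, nh j * (((s:ℤ) * u j) % q₀) := by
    intro s
    simp only [hwdef]
    exact Int.mul_ediv_cancel' (hdvd s)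
  have hwj : ∀ s : ℕ, ∀ j, j ≠ i₀ → w s j = ((s:ℤ) * u j) % q₀ := by
    intro s j hj
    simp only [hwdef]
    rw [if_neg hj]
  have hwsum : ∀ s : ℕ, ∑ j, nh j * w s j = (s:ℤ) := by
    intro s
    have h3 := Finset.add_sum_erase Finset.univ (fun j => nh j * w s j) (Finset.mem_univ i₀)
    beta_reduce at h3
    rw [← h3, hwi₀ s]
    have h5 : ∑ j ∈ Finset.univ.erase i₀, nh j * w s j
        = ∑ j ∈ Finset.univ.erase i₀, nh j * (((s:ℤ) * u j) % q₀) := by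
      refine Finset.sum_congr rfl fun j hj => ?_
      rw [hwj s j (Finset.ne_of_mem_erase hj)]
    rw [h5]
    ring
  have hnhabs : ∀ j, |nh j| ≤ q₀ := fun j => hmax j (Finset.mem_univ j)
  have htri : ∀ a b : ℤ, |a - b| ≤ |a| + |b| := fun a b => by
    rw [sub_eq_add_neg]
    simpa [abs_neg] using abs_add_le a (-b)
  have hdL1 : (1:ℤ) ≤ (d:ℤ) * (L:ℤ) := by
    have ha : (2:ℤ) ≤ (d:ℤ) := by exact_mod_cast hd
    have hb : (1:ℤ) ≤ (L:ℤ) := by exact_mod_cast hL1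
    nlinarith
  have hmod_b : ∀ s : ℕ, ∀ j, |((s:ℤ) * u j) % q₀| ≤ q₀ := by
    intro s j
    rw [abs_of_nonneg (Int.emod_nonneg _ (ne_of_gt hq₀pos))]
    exact le_of_lt (Int.emod_lt_of_pos _ hq₀pos)
  have hwbound : ∀ s : ℕ, s ≤ M → ∀ j, |w s j| ≤ 3 * d * (L:ℤ) := by
    intro s hs j
    by_cases hj : j = i₀
    · rw [hj]
      have hsM : (s:ℤ) ≤ (L:ℤ) * q₀ := by rw [← hMZ]; exact_mod_cast hs
      have hterm : ∀ i ∈ Finset.univ.erase i₀, |nh i * (((s:ℤ) * u i) % q₀)| ≤ q₀ * q₀ := by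
        intro i _
        rw [abs_mul]
        exact mul_le_mul (hnhabs i) (hmod_b s i) (abs_nonneg _) hq₀pos.le
      have hsumabs : |∑ i ∈ Finset.univ.erase i₀, nh i * (((s:ℤ) * u i) % q₀)|
          ≤ (d:ℤ) * (q₀ * q₀) := by
        calc |∑ i ∈ Finset.univ.erase i₀, nh i * (((s:ℤ) * u i) % q₀)|
            ≤ ∑ i ∈ Finset.univ.erase i₀, |nh i * (((s:ℤ) * u i) % q₀)| :=
              Finset.abs_sum_le_sum_abs _ _
          _ ≤ ∑ _i ∈ Finset.univ.erase i₀, q₀ * q₀ := Finset.sum_le_sum hterm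
          _ = ((Finset.univ.erase i₀).card : ℤ) * (q₀ * q₀) := by
              rw [Finset.sum_const, nsmul_eq_mul]
          _ ≤ (d:ℤ) * (q₀ * q₀) := by
              have hc : (Finset.univ.erase i₀).card ≤ d := by
                calc (Finset.univ.erase i₀).card ≤ Finset.univ.card :=
                  Finset.card_le_card (Finset.erase_subset _ _)
                _ = d := by rw [Finset.card_univ, Fintype.card_fin]
              have hc' : ((Finset.univ.erase i₀).card : ℤ) ≤ (d:ℤ) := by exact_mod_cast hc
              nlinarith [mul_pos hq₀pos hq₀pos]
      have hnum : |(s:ℤ) - ∑ i ∈ Finset.univ.erase i₀, nh i * (((s:ℤ) * u i) % q₀)|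
          ≤ q₀ * (3 * d * (L:ℤ)) := by
        calc |(s:ℤ) - ∑ i ∈ Finset.univ.erase i₀, nh i * (((s:ℤ) * u i) % q₀)|
            ≤ |(s:ℤ)| + |∑ i ∈ Finset.univ.erase i₀, nh i * (((s:ℤ) * u i) % q₀)| := htri _ _
          _ ≤ (L:ℤ) * q₀ + (d:ℤ) * (q₀ * q₀) := by
              rw [abs_of_nonneg (Int.ofNat_nonneg s)]
              exact add_le_add hsM hsumabs
          _ ≤ q₀ * (3 * d * (L:ℤ)) := by
              have e1 : (d:ℤ)*q₀*q₀ ≤ (d:ℤ)*q₀*(2*(L:ℤ)) := mul_le_mul_of_nonneg_left hq₀2L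
                (mul_nonneg (by exact_mod_cast Nat.zero_le d) hq₀pos.le)
              have e2 : (0:ℤ) ≤ ((d:ℤ)-1)*((L:ℤ)*q₀) := mul_nonneg
                (by omega)
                (mul_nonneg (by exact_mod_cast Nat.zero_le L) hq₀pos.le)
              nlinarith [e1, e2]
      have habs2 : q₀ * |w s i₀| ≤ q₀ * (3 * d * (L:ℤ)) := by
        calc q₀ * |w s i₀| = |nh i₀| * |w s i₀| := by rw [hq₀def]
          _ = |nh i₀ * w s i₀| := (abs_mul _ _).symm
          _ ≤ q₀ * (3 * d * (L:ℤ)) := by rw [hwi₀ s]; exact hnum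
      exact le_of_mul_le_mul_left habs2 hq₀pos
    · rw [hwj s j hj]
      calc |((s:ℤ) * u j) % q₀| ≤ q₀ := hmod_b s j
        _ ≤ 2 * (L:ℤ) := hq₀2L
        _ ≤ 3 * d * (L:ℤ) := by
            have ha : (2:ℤ) ≤ (d:ℤ) := by exact_mod_cast hd
            have hb : (1:ℤ) ≤ (L:ℤ) := by exact_mod_cast hL1
            nlinarith
  -- coordinate bound for members of S
  have hcoord : ∀ k ∈ S, ∀ i, |k i| ≤ (L:ℤ) := by
    intro k hk i
    have h1 : |(k i:ℝ)| ≤ lam := le_trans (abs_coord_le k i) hk.1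
    have h2 : |(k i:ℝ)| ≤ (L:ℝ) := le_trans h1 hlamL
    have h3 : ((|k i| : ℤ):ℝ) ≤ ((L:ℤ):ℝ) := by push_cast; exact h2
    exact_mod_cast h3
  -- the box
  set B : ℕ := 4 * d * L with hBdef
  have hmem : ∀ k ∈ S, ∀ s : ℕ, s ≤ M → ∀ i, k i + w s i ∈ Finset.Icc (-(B:ℤ)) (B:ℤ) := by
    intro k hk s hs i
    rw [Finset.mem_Icc]
    have h1 : |k i + w s i| ≤ (B:ℤ) := by
      calc |k i + w s i| ≤ |k i| + |w s i| := abs_add_le _ _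
        _ ≤ (L:ℤ) + 3 * d * (L:ℤ) := add_le_add (hcoord k hk i) (hwbound s hs i)
        _ ≤ (B:ℤ) := by
            rw [hBdef]
            push_cast
            have ha : (2:ℤ) ≤ (d:ℤ) := by exact_mod_cast hd
            have hb : (1:ℤ) ≤ (L:ℤ) := by exact_mod_cast hL1
            nlinarith
    constructor
    · linarith [(abs_le.mp h1).1]
    · exact (abs_le.mp h1).2
  -- injection
  set F : ↥S × Fin (M+1) → (Fin d → ↥(Finset.Icc (-(B:ℤ)) (B:ℤ))) := fun p i =>
    ⟨p.1.1 i + w p.2.1 i, hmem p.1.1 p.1.2 p.2.1 (Nat.lt_succ_iff.mp p.2.2) i⟩ with hFdef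
  have hinj : Function.Injective F := by
    rintro ⟨⟨k, hk⟩, s⟩ ⟨⟨k', hk'⟩, s'⟩ h
    have hco : ∀ i, k i + w s.1 i = k' i + w s'.1 i := by
      intro i
      have := congrFun h i
      exact congrArg Subtype.val this
    have hsum2 : ∑ i, nh i * k i + (s.1:ℤ) = ∑ i, nh i * k' i + (s'.1:ℤ) := by
      have h6 : ∑ i, nh i * (k i + w s.1 i) = ∑ i, nh i * (k' i + w s'.1 i) :=
        Finset.sum_congr rfl fun i _ => by rw [hco i]
      have h7 : ∀ (kk : Fin d → ℤ) (ss : ℕ), ∑ i, nh i * (kk i + w ss i)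
          = ∑ i, nh i * kk i + (ss:ℤ) := by
        intro kk ss
        rw [← hwsum ss, ← Finset.sum_add_distrib]
        exact Finset.sum_congr rfl fun i _ => by ring
      rw [h7, h7] at h6
      exact h6
    have hts : ∑ i, nh i * k i = ∑ i, nh i * k' i := htconst k hk k' hk'
    have hss : (s.1:ℤ) = (s'.1:ℤ) := by omega
    have hss' : s = s' := Fin.ext (by exact_mod_cast hss)
    subst hss'
    have hkk : k = k' := by
      funext i
      have := hco i
      omega
    subst hkk
    rfl
  -- counting
  have hcount : (Set.ncard S) * (M+1) ≤ (2*B+1)^d := by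
    have h1 : Nat.card (↥S × Fin (M+1)) ≤ Nat.card (Fin d → ↥(Finset.Icc (-(B:ℤ)) (B:ℤ))) :=
      Nat.card_le_card_of_injective F hinj
    rw [Nat.card_prod, Nat.card_coe_set_eq, Nat.card_fun] at h1
    simp only [Nat.card_eq_fintype_card, Fintype.card_fin, Fintype.card_coe,
      Int.card_Icc] at h1
    have h2 : (((B:ℤ) + 1 - -(B:ℤ)).toNat) = 2*B+1 := by omega
    rwa [h2] at h1
  -- final real arithmetic
  rw [le_div_iff₀ hznh]
  refine le_of_mul_le_mul_right ?_ hlam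
  set N : ℝ := (Set.ncard S : ℝ) with hNdef
  have hN0 : (0:ℝ) ≤ N := Nat.cast_nonneg _
  have f1 : N * ((M:ℝ)+1) ≤ (2*(B:ℝ)+1)^d := by
    have f1' : ((S.ncard * (M+1) : ℕ) : ℝ) ≤ (((2*B+1)^d : ℕ) : ℝ) := Nat.cast_le.mpr hcount
    push_cast at f1'
    exact f1'
  have hBr : (2*(B:ℝ)+1) = 8*(d:ℝ)*(L:ℝ)+1 := by rw [hBdef]; push_cast; ring
  have hLr1 : (1:ℝ) ≤ (L:ℝ) := by exact_mod_cast hL1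
  have f2 : (2*(B:ℝ)+1) ≤ 18*(d:ℝ)*lam := by
    rw [hBr]
    nlinarith [hd1, hLr1, hL2, hlam1]
  have f4 : (2*(B:ℝ)+1)^d ≤ (18*(d:ℝ)*lam)^d :=
    pow_le_pow_left₀ (by positivity) f2 d
  have f5 : (18*(d:ℝ)*lam)^d = (18*(d:ℝ))^d * lam^d := by rw [mul_pow]
  have hMq : (q₀:ℝ) * lam ≤ (M:ℝ) + 1 := by
    have hMr : (M:ℝ) = (L:ℝ) * (q₀:ℝ) := by exact_mod_cast hMZ
    nlinarith [hq₀r, hlamL]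
  have f6 : lam ^ (d-1) * lam = lam ^ d := by
    have h : d - 1 + 1 = d := by omega
    rw [← pow_succ, h]
  calc N * znorm nh * lam ≤ N * ((d:ℝ) * (q₀:ℝ)) * lam :=
        mul_le_mul_of_nonneg_right (mul_le_mul_of_nonneg_left hznhq hN0) hlam.le
    _ = (d:ℝ) * (N * ((q₀:ℝ) * lam)) := by ring
    _ ≤ (d:ℝ) * (N * ((M:ℝ)+1)) :=
        mul_le_mul_of_nonneg_left (mul_le_mul_of_nonneg_left hMq hN0) hd0.le
    _ ≤ (d:ℝ) * (2*(B:ℝ)+1)^d := mul_le_mul_of_nonneg_left f1 hd0.le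
    _ ≤ (d:ℝ) * ((18*(d:ℝ))^d * lam^d) := by
        rw [← f5]
        exact mul_le_mul_of_nonneg_left f4 hd0.le
    _ = (18*(d:ℝ))^d * (d:ℝ) * lam^(d-1) * lam := by rw [← f6]; ring
end
end
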